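/- Let C be a small category with pullbacks. The functor φ : S(C) → Q(C) sends every special morphism of S(C) to an isomorphism of Q(C), and precomposition with φ, F ↦ F ∘ φ, defines an equivalence between the category Fun(Q(C), Ab) of functors from Q(C) to the category Ab of abelian groups and the full subcategory Fun_sp(S(C), Ab) ⊆ Fun(S(C), Ab) consisting of those functors which send every special morphism of S(C) to an isomorphism. -/

import Mathlib

open CategoryTheory CategoryTheory.Limits

universe v u

/-- An object of the category `S(C)`: a positive number of objects of `C` (here `n + 1`
objects) together with a chain of composable morphisms between them. -/
structure SObj (C : Type u) [Category.{v} C] where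
  n : ℕ
  chain : ComposableArrows C n

variable {C : Type u} [Category.{v} C]

/-- A morphism of `S(C)`: an order-preserving map of index sets together with a family of
morphisms of `C` (going backwards) such that all the induced squares are Cartesian
(commutative pullback squares). -/
structure SHom (X Y : SObj C) where
  idx : Fin (X.n + 1) →o Fin (Y.n + 1)
  t : ∀ i : Fin (X.n + 1), Y.chain.obj (idx i) ⟶ X.chain.obj i
  pb : ∀ (i j : Fin (X.n + 1)) (h : i ≤ j),
    IsPullback (t i) (Y.chain.map (homOfLE (idx.monotone h)))
      (X.chain.map (homOfLE h)) (t j)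

theorem SHom.ext' {X Y : SObj C} {f g : SHom X Y} (h1 : f.idx = g.idx)
    (h2 : HEq f.t g.t) : f = g := by
  cases f; cases g
  cases h1; cases h2; rfl

instance : Quiver (SObj C) := ⟨SHom⟩

instance : CategoryStruct (SObj C) where
  id X := SHom.mk OrderHom.id (fun i => 𝟙 _)
    (fun i j h => IsPullback.id_horiz _)
  comp f g := SHom.mk (g.idx.comp f.idx) (fun i => g.t (f.idx i) ≫ f.t i)
    (fun i j h => (g.pb _ _ (f.idx.monotone h)).paste_horiz (f.pb i j h))

instance : Category (SObj C) where
  id_comp f := SHom.ext' rfl (heq_of_eq (funext fun i => Category.comp_id _))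
  comp_id f := SHom.ext' rfl (heq_of_eq (funext fun i => Category.id_comp _))
  assoc f g h := SHom.ext' rfl (heq_of_eq (funext fun i => (Category.assoc _ _ _).symm))

/-- A morphism of `S(C)` is *special* if the index map identifies the source index set with
a final segment of the target index set and all the component morphisms in `C` are
isomorphisms. -/
def special (C : Type u) [Category.{v} C] : MorphismProperty (SObj C) :=
  fun X Y f => X.n ≤ Y.n ∧ (∀ i : Fin (X.n + 1), (SHom.idx f i : ℕ) = Y.n - X.n + (i : ℕ))
    ∧ ∀ i, IsIso (SHom.t f i)

/-- A morphism of `S(C)` is *co-special* if its index map preserves the first elements. -/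
def cospecial (C : Type u) [Category.{v} C] : MorphismProperty (SObj C) :=
  fun _ _ f => SHom.idx f 0 = 0

/-- A span `c₁ ← m → c₂` in `C`. -/
structure SpanO (c₁ c₂ : C) : Type (max u v) where
  mid : C
  l : mid ⟶ c₁
  r : mid ⟶ c₂

/-- Two spans are isomorphic if there is an isomorphism of the middle objects commuting
with both legs. -/
def spanSetoid (c₁ c₂ : C) : Setoid (SpanO c₁ c₂) where
  r s s' := ∃ e : s.mid ≅ s'.mid, e.hom ≫ s'.l = s.l ∧ e.hom ≫ s'.r = s.r
  iseqv := by
    constructor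
    · exact fun s => ⟨Iso.refl _, by simp, by simp⟩
    · rintro s s' ⟨e, h1, h2⟩
      exact ⟨e.symm, by rw [← h1]; simp, by rw [← h2]; simp⟩
    · rintro s s' s'' ⟨e, h1, h2⟩ ⟨e', h1', h2'⟩
      exact ⟨e ≪≫ e', by simp [h1', h1], by simp [h2', h2]⟩

variable (C) in
/-- The objects of the category `Q(C)`: the same as the objects of `C`. -/
def QCat := C

/-- An object of `C` seen as an object of `Q(C)`. -/
def QCat.mk (c : C) : QCat C := c

/-- An object of `Q(C)` seen as an object of `C`. -/
def QCat.obj (c : QCat C) : C := c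

variable [HasPullbacks C]

/-- Morphisms in `Q(C)` are isomorphism classes of spans. -/
instance : Quiver (QCat C) :=
  ⟨fun c₁ c₂ => Quotient (spanSetoid c₁.obj c₂.obj)⟩

/-- Identities are classes of identity spans; composition is defined via pullback. -/
noncomputable instance : CategoryStruct (QCat C) where
  id c := Quotient.mk _ (SpanO.mk c.obj (𝟙 c.obj) (𝟙 c.obj))
  comp {c₁ c₂ c₃} f g := Quotient.lift₂
    (fun (s : SpanO c₁.obj c₂.obj) (t : SpanO c₂.obj c₃.obj) =>
      Quotient.mk _ (SpanO.mk (pullback s.r t.l)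
        (pullback.fst s.r t.l ≫ s.l) (pullback.snd s.r t.l ≫ t.r)))
    (by
      rintro s t s' t' ⟨e, he1, he2⟩ ⟨e', hf1, hf2⟩
      apply Quotient.sound
      refine ⟨asIso (pullback.map s.r t.l s'.r t'.l e.hom e'.hom (𝟙 _)
        (by simp [he2]) (by simp [hf1])), ?_, ?_⟩
      · rw [asIso_hom, ← Category.assoc, pullback.lift_fst, Category.assoc, he1]
      · rw [asIso_hom, ← Category.assoc, pullback.lift_snd, Category.assoc, hf2]) f g

noncomputable instance : Category (QCat C) where
  id_comp {c₁ c₂} f := by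
    obtain ⟨s, rfl⟩ := Quotient.exists_rep f
    exact Quotient.sound ⟨asIso (pullback.snd (𝟙 c₁.obj) s.l),
      pullback.condition.symm, rfl⟩
  comp_id {c₁ c₂} f := by
    obtain ⟨s, rfl⟩ := Quotient.exists_rep f
    exact Quotient.sound ⟨asIso (pullback.fst s.r (𝟙 c₂.obj)), rfl,
      pullback.condition⟩
  assoc {c₁ c₂ c₃ c₄} f g h := by
    obtain ⟨s, rfl⟩ := Quotient.exists_rep f
    obtain ⟨t, rfl⟩ := Quotient.exists_rep g
    obtain ⟨u, rfl⟩ := Quotient.exists_rep h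
    refine Quotient.sound ⟨pullbackAssoc s.r t.l t.r u.l, ?_, ?_⟩
    · dsimp only
      rw [pullbackAssoc_hom_fst_assoc]
    · dsimp only
      rw [pullbackAssoc_hom_snd_snd_assoc]

/-- The functor `φ : S(C) → Q(C)`: it sends a chain `c₁ → ⋯ → c_n` to `c_n`, and a morphism
`⟨f, {f_i}⟩ : ⟨[n], c_•⟩ → ⟨[n'], c'_•⟩` to the class of the span
`c_n ← c'_{f(n)} → c'_{n'}` whose left leg is `f_n` and whose right leg is the composite of
the chain `c'_•`. -/
noncomputable def qfunctor (C : Type u) [Category.{v} C] [HasPullbacks C] :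
    SObj C ⥤ QCat C where
  obj X := QCat.mk (X.chain.obj (Fin.last X.n))
  map {X Y} f := Quotient.mk _ (SpanO.mk (Y.chain.obj (SHom.idx f (Fin.last X.n)))
    (SHom.t f (Fin.last X.n))
    (Y.chain.map (homOfLE (Fin.le_last _))))
  map_id X := by
    refine Quotient.sound ⟨Iso.refl _, Category.id_comp _, ?_⟩
    exact (Category.id_comp _).trans (X.chain.map_id _).symm
  map_comp {X Y Z} f g := by
    refine Quotient.sound
      ⟨(SHom.pb g (SHom.idx f (Fin.last X.n)) (Fin.last Y.n) (Fin.le_last _)).isoPullback,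
        ?_, ?_⟩
    · dsimp only
      exact (Category.assoc _ _ _).symm.trans
        (congrArg (· ≫ _) (IsPullback.isoPullback_hom_fst _))
    · dsimp only
      exact (Category.assoc _ _ _).symm.trans
        ((congrArg (· ≫ _) (IsPullback.isoPullback_hom_snd _)).trans
          ((Functor.map_comp _ _ _).symm.trans (congrArg _ (homOfLE_comp _ _))))

/-!
STATEMENT 9: Let C be a small category with pullbacks. The functor φ : S(C) → Q(C) sends
every special morphism of S(C) to an isomorphism of Q(C), and precomposition with φ,
F ↦ F ∘ φ, defines an equivalence between the category Fun(Q(C), Ab) of functors from Q(C)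
to the category Ab of abelian groups and the full subcategory Fun_sp(S(C), Ab) of functors
sending every special morphism of S(C) to an isomorphism.
-/

universe w

namespace Stmt9
noncomputable section

variable {C : Type u} [Category.{v} C]

lemma myVert {P X Y Z : C} {fst : P ⟶ X} {snd : P ⟶ Y} {f : X ⟶ Z} {g : Y ⟶ Z}
    (h1 : IsIso snd) (h2 : IsIso f) (w : fst ≫ f = snd ≫ g) : IsPullback fst snd f g :=
  haveI := h1; haveI := h2; IsPullback.of_vert_isIso ⟨w⟩

lemma myHoriz {P X Y Z : C} {fst : P ⟶ X} {snd : P ⟶ Y} {f : X ⟶ Z} {g : Y ⟶ Z}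
    (h1 : IsIso fst) (h2 : IsIso g) (w : fst ≫ f = snd ≫ g) : IsPullback fst snd f g :=
  haveI := h1; haveI := h2; IsPullback.of_horiz_isIso ⟨w⟩

/-- The chain of length 0. -/
def iota (c : C) : SObj C := ⟨0, ComposableArrows.mk₀ c⟩

/-- Morphism out of a length-0 chain. -/
def fromIota {c : C} {Y : SObj C} (k : Fin (Y.n + 1)) (t0 : Y.chain.obj k ⟶ c) :
    iota c ⟶ Y where
  idx := OrderHom.const _ k
  t _ := t0
  pb i j h := by
    obtain rfl : i = j := Subsingleton.elim (α := Fin 1) i j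
    refine myVert ?_ ?_ ?_
    · show IsIso (Y.chain.map (𝟙 k)); rw [Y.chain.map_id]; infer_instance
    · show IsIso ((iota c).chain.map (𝟙 i)); rw [CategoryTheory.Functor.map_id]; infer_instance
    · show t0 ≫ (iota c).chain.map (𝟙 i) = Y.chain.map (𝟙 k) ≫ t0
      rw [CategoryTheory.Functor.map_id, CategoryTheory.Functor.map_id]; exact (Category.comp_id _).trans (Category.id_comp _).symm

def pairIdx {n : ℕ} (k₀ k₁ : Fin (n + 1)) : Fin 2 → Fin (n + 1)
  | ⟨0, _⟩ => k₀
  | ⟨1, _⟩ => k₁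

/-- Morphism out of a length-1 chain. -/
def fromSpan {m c₂ : C} (r : m ⟶ c₂) {Y : SObj C} (k₀ k₁ : Fin (Y.n + 1)) (hk : k₀ ≤ k₁)
    (t0 : Y.chain.obj k₀ ⟶ m) (t1 : Y.chain.obj k₁ ⟶ c₂)
    (hpb : IsPullback t0 (Y.chain.map (homOfLE hk)) r t1) :
    (⟨1, ComposableArrows.mk₁ r⟩ : SObj C) ⟶ Y where
  idx := ⟨pairIdx k₀ k₁, by
    intro i j hij
    match i, j, hij with
    | ⟨0,_⟩, ⟨0,_⟩, _ => exact le_refl _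
    | ⟨0,_⟩, ⟨1,_⟩, _ => exact hk
    | ⟨1,_⟩, ⟨1,_⟩, _ => exact le_refl _
    | ⟨1,_⟩, ⟨0,_⟩, hij => exact (Nat.not_succ_le_zero 0 hij).elim⟩
  t := fun i => match i with
    | ⟨0, _⟩ => t0
    | ⟨1, _⟩ => t1
  pb i j h :=
    match i, j, h with
    | ⟨0,hi⟩, ⟨0,hj⟩, h => by
      refine myVert ?_ ?_ ?_
      · show IsIso (Y.chain.map (𝟙 k₀)); rw [Y.chain.map_id]; infer_instance
      · show IsIso ((ComposableArrows.mk₁ r).map (𝟙 (⟨0,hi⟩ : Fin 2)))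
        rw [CategoryTheory.Functor.map_id]; infer_instance
      · show t0 ≫ (ComposableArrows.mk₁ r).map (𝟙 (⟨0,hi⟩ : Fin 2)) =
          Y.chain.map (𝟙 k₀) ≫ t0
        rw [CategoryTheory.Functor.map_id, CategoryTheory.Functor.map_id]; exact (Category.comp_id _).trans (Category.id_comp _).symm
    | ⟨1,hi⟩, ⟨1,hj⟩, h => by
      refine myVert ?_ ?_ ?_
      · show IsIso (Y.chain.map (𝟙 k₁)); rw [Y.chain.map_id]; infer_instance
      · show IsIso ((ComposableArrows.mk₁ r).map (𝟙 (⟨1,hi⟩ : Fin 2)))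
        rw [CategoryTheory.Functor.map_id]; infer_instance
      · show t1 ≫ (ComposableArrows.mk₁ r).map (𝟙 (⟨1,hi⟩ : Fin 2)) =
          Y.chain.map (𝟙 k₁) ≫ t1
        rw [CategoryTheory.Functor.map_id, CategoryTheory.Functor.map_id]; exact (Category.comp_id _).trans (Category.id_comp _).symm
    | ⟨0,hi⟩, ⟨1,hj⟩, h => hpb
    | ⟨1,hi⟩, ⟨0,hj⟩, h => (Nat.not_succ_le_zero 0 h).elim

end
end Stmt9
namespace Stmt9
noncomputable section
variable {C : Type u} [Category.{v} C] {c₁ c₂ c₃ : C}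

def spanObj (s : SpanO c₁ c₂) : SObj C := ⟨1, ComposableArrows.mk₁ s.r⟩

def aHom (s : SpanO c₁ c₂) : iota c₁ ⟶ spanObj s :=
  fromIota ⟨0, Nat.succ_pos _⟩ s.l

def bHom (s : SpanO c₁ c₂) : iota c₂ ⟶ spanObj s :=
  fromIota ⟨1, Nat.lt_succ_self _⟩ (𝟙 c₂)

lemma bHom_special (s : SpanO c₁ c₂) : special C (bHom s) := by
  refine ⟨Nat.zero_le _, fun i => ?_, fun i => ?_⟩
  · obtain rfl := Subsingleton.elim (α := Fin 1) 0 i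
    rfl
  · obtain rfl := Subsingleton.elim (α := Fin 1) 0 i
    exact inferInstanceAs (IsIso (𝟙 c₂))

def idSpan (c : C) : SpanO c c := ⟨c, 𝟙 c, 𝟙 c⟩

def pHom (c : C) : spanObj (idSpan c) ⟶ iota c :=
  fromSpan (idSpan c).r ⟨0, Nat.succ_pos _⟩ ⟨0, Nat.succ_pos _⟩ (le_refl _) (𝟙 c) (𝟙 c)
    (myHoriz (inferInstanceAs (IsIso (𝟙 _))) (inferInstanceAs (IsIso (𝟙 _))) (by
      show 𝟙 c ≫ 𝟙 c = (iota c).chain.map (𝟙 _) ≫ 𝟙 c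
      rw [CategoryTheory.Functor.map_id]; rfl))

lemma a_p (c : C) : aHom (idSpan c) ≫ pHom c = 𝟙 (iota c) := by
  apply SHom.ext'
  · apply OrderHom.ext; funext i
    exact Subsingleton.elim (α := Fin 1) _ _
  · apply heq_of_eq; funext i
    show 𝟙 c ≫ 𝟙 c = 𝟙 c
    simp

lemma b_p (c : C) : bHom (idSpan c) ≫ pHom c = 𝟙 (iota c) := by
  apply SHom.ext'
  · apply OrderHom.ext; funext i
    exact Subsingleton.elim (α := Fin 1) _ _
  · apply heq_of_eq; funext i
    show 𝟙 c ≫ 𝟙 c = 𝟙 c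
    simp

section WH
variable {s s' : SpanO c₁ c₂} (e : s.mid ≅ s'.mid) (hr : e.hom ≫ s'.r = s.r)

def wHom : spanObj s ⟶ spanObj s' :=
  fromSpan s.r ⟨0, Nat.succ_pos _⟩ ⟨1, Nat.lt_succ_self _⟩ (Nat.zero_le _) e.inv (𝟙 c₂)
    (myHoriz (inferInstanceAs (IsIso e.inv)) (inferInstanceAs (IsIso (𝟙 c₂))) (by
      show e.inv ≫ s.r = s'.r ≫ 𝟙 c₂
      rw [Category.comp_id, Iso.inv_comp_eq, hr]))

lemma wHom_special : special C (wHom e hr) := by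
  refine ⟨le_refl _, fun i => ?_, fun i => ?_⟩
  · match i with
    | ⟨0, _⟩ => rfl
    | ⟨1, _⟩ => rfl
  · match i with
    | ⟨0, _⟩ => exact inferInstanceAs (IsIso e.inv)
    | ⟨1, _⟩ => exact inferInstanceAs (IsIso (𝟙 c₂))

lemma a_w (hl : e.hom ≫ s'.l = s.l) : aHom s ≫ wHom e hr = aHom s' := by
  apply SHom.ext'
  · apply OrderHom.ext; funext i; rfl
  · apply heq_of_eq; funext i
    show e.inv ≫ s.l = s'.l
    rw [Iso.inv_comp_eq, hl]

lemma b_w : bHom s ≫ wHom e hr = bHom s' := by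
  apply SHom.ext'
  · apply OrderHom.ext; funext i; rfl
  · apply heq_of_eq; funext i
    show 𝟙 c₂ ≫ 𝟙 c₂ = 𝟙 c₂
    simp

end WH

def iotaHom (X : SObj C) : iota (X.chain.obj (Fin.last X.n)) ⟶ X :=
  fromIota (Fin.last X.n) (𝟙 _)

lemma iotaHom_special (X : SObj C) : special C (iotaHom X) := by
  refine ⟨Nat.zero_le _, fun i => ?_, fun i => ?_⟩
  · obtain rfl := Subsingleton.elim (α := Fin 1) 0 i
    show (Fin.last X.n).val = X.n - 0 + (0 : Fin 1).val
    rw [Fin.val_zero, Fin.val_last]; omega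
  · obtain rfl := Subsingleton.elim (α := Fin 1) 0 i
    exact inferInstanceAs (IsIso (𝟙 _))

def phiSpan {X Y : SObj C} (f : X ⟶ Y) :
    SpanO (X.chain.obj (Fin.last X.n)) (Y.chain.obj (Fin.last Y.n)) :=
  ⟨Y.chain.obj (SHom.idx f (Fin.last X.n)), SHom.t f (Fin.last X.n),
    Y.chain.map (homOfLE (Fin.le_last _))⟩

def kHom {X Y : SObj C} (f : X ⟶ Y) : spanObj (phiSpan f) ⟶ Y :=
  fromSpan (phiSpan f).r (SHom.idx f (Fin.last X.n)) (Fin.last Y.n) (Fin.le_last _)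
    (𝟙 _) (𝟙 _)
    (myHoriz (inferInstanceAs (IsIso (𝟙 _))) (inferInstanceAs (IsIso (𝟙 _))) (by
      show 𝟙 _ ≫ Y.chain.map (homOfLE (Fin.le_last _)) =
        Y.chain.map (homOfLE (Fin.le_last _)) ≫ 𝟙 _
      rw [Category.id_comp, Category.comp_id]))

lemma a_k {X Y : SObj C} (f : X ⟶ Y) : aHom (phiSpan f) ≫ kHom f = iotaHom X ≫ f := by
  apply SHom.ext'
  · apply OrderHom.ext; funext i; rfl
  · apply heq_of_eq; funext i
    show 𝟙 _ ≫ SHom.t f (Fin.last X.n) = SHom.t f (Fin.last X.n) ≫ 𝟙 _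
    rw [Category.id_comp, Category.comp_id]

lemma b_k {X Y : SObj C} (f : X ⟶ Y) : bHom (phiSpan f) ≫ kHom f = iotaHom Y := by
  apply SHom.ext'
  · apply OrderHom.ext; funext i; rfl
  · apply heq_of_eq; funext i
    show 𝟙 _ ≫ 𝟙 _ = 𝟙 _
    simp

section Comp
variable [HasPullbacks C]

def compSpan (s : SpanO c₁ c₂) (t : SpanO c₂ c₃) : SpanO c₁ c₃ :=
  SpanO.mk (pullback s.r t.l) (pullback.fst s.r t.l ≫ s.l) (pullback.snd s.r t.l ≫ t.r)

def ZObj (s : SpanO c₁ c₂) (t : SpanO c₂ c₃) : SObj C :=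
  ⟨2, ComposableArrows.mk₂ (pullback.snd s.r t.l) t.r⟩

def e₁ (s : SpanO c₁ c₂) (t : SpanO c₂ c₃) : spanObj s ⟶ ZObj s t :=
  fromSpan s.r ⟨0, Nat.succ_pos _⟩ ⟨1, by exact (by omega : (1:ℕ) < 3)⟩ (Nat.zero_le _)
    (pullback.fst s.r t.l) t.l (IsPullback.of_hasPullback s.r t.l)

def e₂ (s : SpanO c₁ c₂) (t : SpanO c₂ c₃) : spanObj t ⟶ ZObj s t :=
  fromSpan t.r ⟨1, by exact (by omega : (1:ℕ) < 3)⟩ ⟨2, by exact (by omega : (2:ℕ) < 3)⟩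
    (by exact (by omega : (1:ℕ) ≤ 2)) (𝟙 t.mid) (𝟙 c₃)
    (myHoriz (IsIso.id t.mid) (IsIso.id c₃) (by
      show 𝟙 t.mid ≫ t.r = t.r ≫ 𝟙 c₃
      simp))

def e₃ (s : SpanO c₁ c₂) (t : SpanO c₂ c₃) : spanObj (compSpan s t) ⟶ ZObj s t :=
  fromSpan (compSpan s t).r ⟨0, Nat.succ_pos _⟩ ⟨2, by exact (by omega : (2:ℕ) < 3)⟩
    (Nat.zero_le _) (𝟙 _) (𝟙 _)
    (myHoriz (inferInstanceAs (IsIso (𝟙 _))) (IsIso.id c₃) (by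
      show 𝟙 (pullback s.r t.l) ≫ pullback.snd s.r t.l ≫ t.r =
        (pullback.snd s.r t.l ≫ t.r) ≫ 𝟙 c₃
      simp))

lemma e₂_special (s : SpanO c₁ c₂) (t : SpanO c₂ c₃) : special C (e₂ s t) := by
  refine ⟨(by omega : (1:ℕ) ≤ 2), fun i => ?_, fun i => ?_⟩
  · match i with
    | ⟨0, _⟩ => rfl
    | ⟨1, _⟩ => rfl
  · match i with
    | ⟨0, _⟩ => exact inferInstanceAs (IsIso (𝟙 t.mid))
    | ⟨1, _⟩ => exact inferInstanceAs (IsIso (𝟙 c₃))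

lemma a_e₃ (s : SpanO c₁ c₂) (t : SpanO c₂ c₃) :
    aHom (compSpan s t) ≫ e₃ s t = aHom s ≫ e₁ s t := by
  apply SHom.ext'
  · apply OrderHom.ext; funext i; rfl
  · apply heq_of_eq; funext i
    show 𝟙 _ ≫ pullback.fst s.r t.l ≫ s.l = pullback.fst s.r t.l ≫ s.l
    simp

lemma b_e₃ (s : SpanO c₁ c₂) (t : SpanO c₂ c₃) :
    bHom (compSpan s t) ≫ e₃ s t = bHom t ≫ e₂ s t := by
  apply SHom.ext'
  · apply OrderHom.ext; funext i; rfl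
  · apply heq_of_eq; funext i
    show 𝟙 _ ≫ 𝟙 _ = 𝟙 _ ≫ 𝟙 _
    rfl

lemma m_e (s : SpanO c₁ c₂) (t : SpanO c₂ c₃) :
    bHom s ≫ e₁ s t = aHom t ≫ e₂ s t := by
  apply SHom.ext'
  · apply OrderHom.ext; funext i; rfl
  · apply heq_of_eq; funext i
    show t.l ≫ 𝟙 c₂ = 𝟙 t.mid ≫ t.l
    simp

end Comp
end
end Stmt9
namespace Stmt9
noncomputable section
variable {C : Type u} [Category.{v} C] [HasPullbacks C] {c₁ c₂ c₃ : C}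

def qmk (s : SpanO c₁ c₂) : QCat.mk c₁ ⟶ QCat.mk c₂ := Quotient.mk _ s

lemma qmk_comp (s : SpanO c₁ c₂) (t : SpanO c₂ c₃) :
    qmk s ≫ qmk t = qmk (compSpan s t) := rfl

lemma qid (c : C) : 𝟙 (QCat.mk c) = qmk (idSpan c) := rfl

lemma qmk_isIso (s : SpanO c₁ c₂) (hl : IsIso s.l) (hr : IsIso s.r) : IsIso (qmk s) := by
  haveI := hl; haveI := hr
  have i1 : IsIso (pullback.fst s.r s.r ≫ s.l) := inferInstance
  have i2 : IsIso (pullback.fst s.l s.l ≫ s.r) := inferInstance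
  refine ⟨qmk ⟨s.mid, s.r, s.l⟩, ?_, ?_⟩
  · rw [qmk_comp, qid]
    apply Quotient.sound
    refine ⟨@asIso _ _ _ _ (pullback.fst s.r s.r ≫ s.l) i1, ?_, ?_⟩
    · show (pullback.fst s.r s.r ≫ s.l) ≫ 𝟙 c₁ = pullback.fst s.r s.r ≫ s.l
      simp
    · show (pullback.fst s.r s.r ≫ s.l) ≫ 𝟙 c₁ = pullback.snd s.r s.r ≫ s.l
      rw [Category.comp_id, fst_eq_snd_of_mono_eq]
  · rw [qmk_comp, qid]
    apply Quotient.sound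
    refine ⟨@asIso _ _ _ _ (pullback.fst s.l s.l ≫ s.r) i2, ?_, ?_⟩
    · show (pullback.fst s.l s.l ≫ s.r) ≫ 𝟙 c₂ = pullback.fst s.l s.l ≫ s.r
      simp
    · show (pullback.fst s.l s.l ≫ s.r) ≫ 𝟙 c₂ = pullback.snd s.l s.l ≫ s.r
      rw [Category.comp_id, fst_eq_snd_of_mono_eq]

lemma phi_map_eq {X Y : SObj C} (f : X ⟶ Y) :
    (qfunctor C).map f = qmk (phiSpan f) := rfl

lemma phi_special {X Y : SObj C} (f : X ⟶ Y) (hf : special C f) :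
    IsIso ((qfunctor C).map f) := by
  obtain ⟨h1, h2, h3⟩ := hf
  rw [phi_map_eq]
  refine qmk_isIso _ (h3 _) ?_
  show IsIso (Y.chain.map (homOfLE (Fin.le_last (SHom.idx f (Fin.last X.n)))))
  have hlast : SHom.idx f (Fin.last X.n) = Fin.last Y.n := by
    apply Fin.ext
    rw [h2, Fin.val_last, Fin.val_last]
    omega
  revert hlast
  generalize SHom.idx f (Fin.last X.n) = a
  intro hlast
  subst hlast
  have : Y.chain.map (homOfLE (Fin.le_last (Fin.last Y.n))) = 𝟙 _ := Y.chain.map_id _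
  rw [this]
  infer_instance

lemma phi_b (s : SpanO c₁ c₂) : (qfunctor C).map (bHom s) = 𝟙 (QCat.mk c₂) := rfl

lemma phi_a (s : SpanO c₁ c₂) : (qfunctor C).map (aHom s) = qmk s := rfl

lemma phi_iota (X : SObj C) :
    (qfunctor C).map (iotaHom X) = 𝟙 ((qfunctor C).obj X) := by
  apply Quotient.sound
  refine ⟨Iso.refl _, ?_, ?_⟩
  · show 𝟙 (X.chain.obj (Fin.last X.n)) ≫ 𝟙 (X.chain.obj (Fin.last X.n)) =
      𝟙 (X.chain.obj (Fin.last X.n))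
    simp
  · show 𝟙 _ ≫ 𝟙 _ = X.chain.map (homOfLE (Fin.le_last _))
    rw [Category.id_comp]
    exact (X.chain.map_id _).symm

section Gamma
universe ue ve
variable {E : Type ue} [Category.{ve} E] {H H' : QCat C ⥤ E}
  (δ : qfunctor C ⋙ H ⟶ qfunctor C ⋙ H')

lemma gamma_app_span (s : SpanO c₁ c₂) :
    δ.app (spanObj s) = δ.app (iota c₂) := by
  have e : H.map ((qfunctor C).map (bHom s)) = 𝟙 (H.obj ((qfunctor C).obj (spanObj s))) := by
    rw [phi_b]; exact H.map_id _
  have e' : H'.map ((qfunctor C).map (bHom s)) = 𝟙 (H'.obj ((qfunctor C).obj (spanObj s))) := by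
    rw [phi_b]; exact H'.map_id _
  have h : H.map ((qfunctor C).map (bHom s)) ≫ δ.app (spanObj s)
      = δ.app (iota c₂) ≫ H'.map ((qfunctor C).map (bHom s)) := δ.naturality (bHom s)
  exact (Category.id_comp _).symm.trans ((congrArg (· ≫ δ.app _) e.symm).trans
    (h.trans ((congrArg (δ.app _ ≫ ·) e').trans (Category.comp_id _))))

lemma gamma_app_sobj (X : SObj C) :
    δ.app X = δ.app (iota (X.chain.obj (Fin.last X.n))) := by
  have e : H.map ((qfunctor C).map (iotaHom X)) = 𝟙 (H.obj ((qfunctor C).obj X)) := by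
    rw [phi_iota]; exact H.map_id _
  have e' : H'.map ((qfunctor C).map (iotaHom X)) = 𝟙 (H'.obj ((qfunctor C).obj X)) := by
    rw [phi_iota]; exact H'.map_id _
  have h : H.map ((qfunctor C).map (iotaHom X)) ≫ δ.app X
      = δ.app (iota (X.chain.obj (Fin.last X.n))) ≫ H'.map ((qfunctor C).map (iotaHom X)) :=
    δ.naturality (iotaHom X)
  exact (Category.id_comp _).symm.trans ((congrArg (· ≫ δ.app _) e.symm).trans
    (h.trans ((congrArg (δ.app _ ≫ ·) e').trans (Category.comp_id _))))

lemma gamma_natural (s : SpanO c₁ c₂) :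
    (qfunctor C ⋙ H).map (aHom s) ≫ δ.app (iota c₂)
      = δ.app (iota c₁) ≫ (qfunctor C ⋙ H').map (aHom s) := by
  have h := δ.naturality (aHom s)
  rw [gamma_app_span δ s] at h
  exact h

end Gamma

section G
variable (F : SObj C ⥤ AddCommGrpCat.{w})
  (hF : ∀ {X Y : SObj C} (f : X ⟶ Y), special C f → IsIso (F.map f))

def Gmap (hF : ∀ {X Y : SObj C} (f : X ⟶ Y), special C f → IsIso (F.map f)) : (QCat.mk c₁ ⟶ QCat.mk c₂) → (F.obj (iota c₁) ⟶ F.obj (iota c₂)) :=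
  Quotient.lift (fun s => 
      F.map (aHom s) ≫ @inv _ _ _ _ (F.map (bHom s)) (hF _ (bHom_special s))) (by
    rintro s s' ⟨e, hl, hr⟩
    haveI := hF _ (bHom_special s)
    haveI := hF _ (bHom_special s')
    haveI := hF _ (wHom_special e hr)
    show F.map (aHom s) ≫ inv (F.map (bHom s)) = F.map (aHom s') ≫ inv (F.map (bHom s'))
    have ha : F.map (aHom s') = F.map (aHom s) ≫ F.map (wHom e hr) := by
      rw [← F.map_comp, a_w e hr hl]
    have hbw : inv (F.map (bHom s')) = inv (F.map (wHom e hr)) ≫ inv (F.map (bHom s)) := by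
      apply IsIso.inv_eq_of_hom_inv_id
      rw [← b_w e hr, F.map_comp]
      simp
    rw [hbw, ha]
    simp)

lemma Gmap_mk (s : SpanO c₁ c₂) : Gmap F hF (qmk s) =
     F.map (aHom s) ≫ @inv _ _ _ _ (F.map (bHom s)) (hF _ (bHom_special s)) := rfl

def Gfun (hF : ∀ {X Y : SObj C} (f : X ⟶ Y), special C f → IsIso (F.map f)) : QCat C ⥤ AddCommGrpCat.{w} where
  obj c := F.obj (iota (QCat.obj c))
  map {a b} q := Gmap F hF (c₁ := QCat.obj a) (c₂ := QCat.obj b) q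
  map_id c := by
    show Gmap F hF (qmk (idSpan (QCat.obj c))) = 𝟙 (F.obj (iota (QCat.obj c)))
    rw [Gmap_mk]
    haveI hb := hF _ (bHom_special (idSpan (QCat.obj c)))
    have hpb : F.map (bHom (idSpan (QCat.obj c))) ≫ F.map (pHom (QCat.obj c)) = 𝟙 _ := by
      rw [← F.map_comp, b_p, F.map_id]
    have hpa : F.map (aHom (idSpan (QCat.obj c))) ≫ F.map (pHom (QCat.obj c)) = 𝟙 _ := by
      rw [← F.map_comp, a_p, F.map_id]
    rw [IsIso.inv_eq_of_hom_inv_id hpb]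
    exact hpa
  map_comp {a b c} q q' := by
    obtain ⟨s, rfl⟩ := Quotient.exists_rep q
    obtain ⟨t, rfl⟩ := Quotient.exists_rep q'
    show Gmap F hF (qmk (compSpan s t)) = Gmap F hF (qmk s) ≫ Gmap F hF (qmk t)
    rw [Gmap_mk, Gmap_mk, Gmap_mk]
    haveI := hF _ (bHom_special s)
    haveI := hF _ (bHom_special t)
    haveI := hF _ (bHom_special (compSpan s t))
    haveI := hF _ (e₂_special s t)
    have h1 : inv (F.map (bHom (compSpan s t))) =
        F.map (e₃ s t) ≫ inv (F.map (e₂ s t)) ≫ inv (F.map (bHom t)) := by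
      apply IsIso.inv_eq_of_hom_inv_id
      rw [← Category.assoc, ← F.map_comp, b_e₃, F.map_comp]
      simp
    have h2 : F.map (e₁ s t) = inv (F.map (bHom s)) ≫ F.map (aHom t) ≫ F.map (e₂ s t) := by
      rw [IsIso.eq_inv_comp, ← F.map_comp, ← F.map_comp, m_e]
    have h3 : F.map (aHom (compSpan s t)) ≫ F.map (e₃ s t) =
        F.map (aHom s) ≫ F.map (e₁ s t) := by
      rw [← F.map_comp, ← F.map_comp, a_e₃]
    rw [h1, ← Category.assoc, h3, Category.assoc, h2]
    simp

def GfunIso :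
    ((Functor.whiskeringLeft (SObj C) (QCat C) AddCommGrpCat.{w}).obj (qfunctor C)).obj (Gfun F hF) ≅ F :=
  NatIso.ofComponents
    (fun X => @asIso _ _ _ _ (F.map (iotaHom X)) (hF _ (iotaHom_special X)))
    (fun {X Y} f => by
      haveI := hF _ (iotaHom_special X)
      haveI := hF _ (iotaHom_special Y)
      haveI := hF _ (bHom_special (phiSpan f))
      show Gmap F hF (qmk (phiSpan f)) ≫ F.map (iotaHom Y) = F.map (iotaHom X) ≫ F.map f
      rw [Gmap_mk]
      have hb : inv (F.map (bHom (phiSpan f))) ≫ F.map (iotaHom Y) = F.map (kHom f) := by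
        rw [IsIso.inv_comp_eq, ← F.map_comp, b_k]
      rw [Category.assoc, hb, ← F.map_comp, a_k, F.map_comp])

end G
end
end Stmt9
theorem stmt9 (C : Type u) [Category.{v} C] [HasPullbacks C] :
    -- `φ` sends special morphisms to isomorphisms ...
    (∀ {X Y : SObj C} (f : X ⟶ Y), special C f → IsIso ((qfunctor C).map f)) ∧
    -- ... and precomposition with `φ` is an equivalence of `Fun(Q(C), Ab)` with the full
    -- subcategory `Fun_sp(S(C), Ab) ⊆ Fun(S(C), Ab)`: it is fully faithful, takes values
    -- in `Fun_sp(S(C), Ab)`, and every special functor is isomorphic to a functor in its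
    -- image.
    (((Functor.whiskeringLeft (SObj C) (QCat C) AddCommGrpCat.{w}).obj (qfunctor C)).Full ∧
     ((Functor.whiskeringLeft (SObj C) (QCat C) AddCommGrpCat.{w}).obj (qfunctor C)).Faithful ∧
     (∀ (G : QCat C ⥤ AddCommGrpCat.{w}) {X Y : SObj C} (f : X ⟶ Y), special C f →
        IsIso ((((Functor.whiskeringLeft (SObj C) (QCat C) AddCommGrpCat.{w}).obj
          (qfunctor C)).obj G).map f)) ∧
     (∀ F : SObj C ⥤ AddCommGrpCat.{w},
        (∀ {X Y : SObj C} (f : X ⟶ Y), special C f → IsIso (F.map f)) →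
        ∃ G : QCat C ⥤ AddCommGrpCat.{w},
          Nonempty ((((Functor.whiskeringLeft (SObj C) (QCat C) AddCommGrpCat.{w}).obj
            (qfunctor C)).obj G) ≅ F))) := by
  refine ⟨fun f hf => Stmt9.phi_special f hf, ?_, ?_, ?_, ?_⟩
  · -- Full
    constructor
    intro G G' γ
    refine ⟨⟨fun c => γ.app (Stmt9.iota (QCat.obj c)), ?_⟩, ?_⟩
    · intro a b q
      obtain ⟨s, rfl⟩ := Quotient.exists_rep q
      exact Stmt9.gamma_natural γ s
    · apply NatTrans.ext; funext X
      exact (Stmt9.gamma_app_sobj γ X).symm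
  · -- Faithful
    constructor
    intro G G' β₁ β₂ hβ
    apply NatTrans.ext; funext c
    exact NatTrans.congr_app hβ (Stmt9.iota (QCat.obj c))
  · -- composites invert special morphisms
    intro G X Y f hf
    haveI := Stmt9.phi_special f hf
    show IsIso (G.map ((qfunctor C).map f))
    infer_instance
  · -- essential surjectivity onto special functors
    intro F hF
    exact ⟨Stmt9.Gfun F hF, ⟨Stmt9.GfunIso F hF⟩⟩
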